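/- Let ρ be a two-qubit state with correlation matrix T, and let λ1 ≥ λ2 be the two largest eigenvalues of the real symmetric matrix T * Tᵀ. Then 2·√(λ1+λ2) is the greatest element of the set of quantities √((E(1,1)+E(2,1))² + (E(1,2)+E(2,2))²) + √((E(1,1)−E(2,1))² + (E(1,2)−E(2,2))²) taken over all quadruples of unit vectors a1, a2, b1, b2 in EuclideanSpace ℝ (Fin 3) satisfying ⟪a1, a2⟫ = 0 and ⟪b1, b2⟫ = 0, where E(m,n) := Re(trace(ρ * ((a_m·σ) ⊗ₖ (b_n·σ)))): every such quantity is at most 2·√(λ1+λ2), and some such quadruple attains this value. -/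

import Mathlib

open Matrix Polynomial
open scoped Kronecker Matrix ComplexOrder

noncomputable section

/-- Pauli matrix σ1. -/
def σ₁ : Matrix (Fin 2) (Fin 2) ℂ := !![0, 1; 1, 0]
/-- Pauli matrix σ2. -/
def σ₂ : Matrix (Fin 2) (Fin 2) ℂ := !![0, -Complex.I; Complex.I, 0]
/-- Pauli matrix σ3. -/
def σ₃ : Matrix (Fin 2) (Fin 2) ℂ := !![1, 0; 0, -1]

/-- The three Pauli matrices. -/
def pauli : Fin 3 → Matrix (Fin 2) (Fin 2) ℂ := ![σ₁, σ₂, σ₃]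

/-- `v·σ` for a real 3-vector `v`. -/
def pauliVec (v : EuclideanSpace ℝ (Fin 3)) : Matrix (Fin 2) (Fin 2) ℂ :=
  (v 0 : ℂ) • σ₁ + (v 1 : ℂ) • σ₂ + (v 2 : ℂ) • σ₃

/-- Full correlation `E = Re tr(ρ ((a·σ) ⊗ₖ (b·σ)))`. -/
def corrE (ρ : Matrix (Fin 2 × Fin 2) (Fin 2 × Fin 2) ℂ)
    (a b : EuclideanSpace ℝ (Fin 3)) : ℝ :=
  ((ρ * (pauliVec a ⊗ₖ pauliVec b)).trace).re

/-- Correlation matrix `T i j = Re tr(ρ (σᵢ ⊗ₖ σⱼ))` of a two-qubit state. -/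
def corrMatrix (ρ : Matrix (Fin 2 × Fin 2) (Fin 2 × Fin 2) ℂ) : Matrix (Fin 3) (Fin 3) ℝ :=
  fun i j => ((ρ * (pauli i ⊗ₖ pauli j)).trace).re

/-- The CHSH value `E(1,1) + E(2,1) + E(1,2) − E(2,2)` of `ρ` at `(a1,a2,b1,b2)`. -/
def CHSHval (ρ : Matrix (Fin 2 × Fin 2) (Fin 2 × Fin 2) ℂ)
    (a1 a2 b1 b2 : EuclideanSpace ℝ (Fin 3)) : ℝ :=
  corrE ρ a1 b1 + corrE ρ a2 b1 + corrE ρ a1 b2 - corrE ρ a2 b2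

/-- The real inner product on `EuclideanSpace ℝ (Fin 3)`. -/
def rip (x y : EuclideanSpace ℝ (Fin 3)) : ℝ := inner ℝ x y

/-- Action of a real 3×3 matrix on a Euclidean 3-vector. -/
def matVec (T : Matrix (Fin 3) (Fin 3) ℝ) (v : EuclideanSpace ℝ (Fin 3)) :
    EuclideanSpace ℝ (Fin 3) :=
  (EuclideanSpace.equiv (Fin 3) ℝ).symm (T.mulVec (EuclideanSpace.equiv (Fin 3) ℝ v))

/-- `b1', b2'` is the dual basis of the pair `b1, b2` inside `span{b1, b2}`:
`⟪b'_m, b_n⟫ = δ_{mn}`. -/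
def IsDualPair (b1 b2 b1' b2' : EuclideanSpace ℝ (Fin 3)) : Prop :=
  b1' ∈ Submodule.span ℝ ({b1, b2} : Set (EuclideanSpace ℝ (Fin 3))) ∧
  b2' ∈ Submodule.span ℝ ({b1, b2} : Set (EuclideanSpace ℝ (Fin 3))) ∧
  rip b1' b1 = 1 ∧ rip b1' b2 = 0 ∧ rip b2' b1 = 0 ∧ rip b2' b2 = 1

/-- The analog CHSH value of `ρ` at `(a1,a2,b1,b2)`, with `b1', b2'` the dual basis of
`b1, b2`. -/
def ACHSHval (ρ : Matrix (Fin 2 × Fin 2) (Fin 2 × Fin 2) ℂ)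
    (a1 a2 b1 b2 b1' b2' : EuclideanSpace ℝ (Fin 3)) : ℝ :=
  ‖(corrE ρ a1 b1 + corrE ρ a2 b1) • b1' + (corrE ρ a1 b2 + corrE ρ a2 b2) • b2'‖ +
  ‖(corrE ρ a1 b1 - corrE ρ a2 b1) • b1' + (corrE ρ a1 b2 - corrE ρ a2 b2) • b2'‖

/-- A family `P a m` (outcome `a`, setting `m`) of 2×2 matrices admits a finite
local-hidden-state model. -/
def HasLHSModel (P : Fin 2 → Fin 2 → Matrix (Fin 2) (Fin 2) ℂ) : Prop :=
  ∃ (N : ℕ) (τ : Fin N → Matrix (Fin 2) (Fin 2) ℂ) (q : Fin 2 → Fin 2 → Fin N → ℝ),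
    (∀ lam, (τ lam).PosSemidef) ∧
    (∀ a m lam, 0 ≤ q a m lam ∧ q a m lam ≤ 1) ∧
    (∀ m lam, q 0 m lam + q 1 m lam = 1) ∧
    (∀ a m, P a m = ∑ lam, q a m lam • τ lam)

/-- Full correlations `E m n` admit a finite LHV-LHS model with respect to Bob's
measurement vectors `b 0, b 1`. -/
def HasLHVLHSModel (E : Fin 2 → Fin 2 → ℝ) (b : Fin 2 → EuclideanSpace ℝ (Fin 3)) : Prop :=
  ∃ (N : ℕ) (p : Fin N → ℝ) (e : Fin 2 → Fin N → ℝ)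
    (ρs : Fin N → Matrix (Fin 2) (Fin 2) ℂ),
    (∀ lam, 0 ≤ p lam) ∧ (∑ lam, p lam = 1) ∧
    (∀ m lam, e m lam ∈ Set.Icc (-1 : ℝ) 1) ∧
    (∀ lam, (ρs lam).PosSemidef ∧ (ρs lam).trace = 1) ∧
    (∀ m n, E m n = ∑ lam, p lam * e m lam * ((ρs lam * pauliVec (b n)).trace).re)

/-- Full correlations `E m n` admit a finite LHV model. -/
def HasLHVModel (E : Fin 2 → Fin 2 → ℝ) : Prop :=
  ∃ (N : ℕ) (p : Fin N → ℝ) (e f : Fin 2 → Fin N → ℝ),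
    (∀ lam, 0 ≤ p lam) ∧ (∑ lam, p lam = 1) ∧
    (∀ m lam, e m lam ∈ Set.Icc (-1 : ℝ) 1) ∧
    (∀ n lam, f n lam ∈ Set.Icc (-1 : ℝ) 1) ∧
    (∀ m n, E m n = ∑ lam, p lam * e m lam * f n lam)

/-- The effect `(1/2)(I + (−1)^i v·σ)` of the projective measurement along `v`. -/
def effect (v : EuclideanSpace ℝ (Fin 3)) (i : Fin 2) : Matrix (Fin 2) (Fin 2) ℂ :=
  (1/2 : ℝ) • ((1 : Matrix (Fin 2) (Fin 2) ℂ) + ((-1 : ℝ) ^ (i : ℕ)) • pauliVec v)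

section AuxiliaryLemmas

lemma aux_charmatrix_diagonal {n R : Type*} [Fintype n] [DecidableEq n] [CommRing R] (d : n → R) :
    charmatrix (Matrix.diagonal d) = Matrix.diagonal (fun i => (X : R[X]) - C (d i)) := by
  ext i j
  by_cases h : i = j
  · subst h; simp
  · simp [charmatrix_apply_ne _ _ _ h, Matrix.diagonal_apply_ne _ h]

lemma aux_charpoly_diagonal {n R : Type*} [Fintype n] [DecidableEq n] [CommRing R] (d : n → R) :
    (Matrix.diagonal d).charpoly = ∏ i, ((X : R[X]) - C (d i)) := by
  rw [Matrix.charpoly, aux_charmatrix_diagonal, Matrix.det_diagonal]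

lemma aux_charpoly_conj {n R : Type*} [Fintype n] [DecidableEq n] [CommRing R]
    (U V D : Matrix n n R) (hUV : U * V = 1) :
    (U * D * V).charpoly = D.charpoly := by
  classical
  set f : Matrix n n R →+* Matrix n n R[X] := (C : R →+* R[X]).mapMatrix with hf
  have h1 : f U * f V = 1 := by rw [← _root_.map_mul, hUV, _root_.map_one]
  have hcomm : ∀ M : Matrix n n R[X], Matrix.scalar n (X : R[X]) * M = M * Matrix.scalar n X :=
    fun M => (Matrix.scalar_commute (X : R[X]) (fun r' => Commute.all _ _) M).eq
  have key : charmatrix (U * D * V) = f U * charmatrix D * f V := by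
    unfold charmatrix
    rw [show (C : R →+* R[X]).mapMatrix (U * D * V) = f U * f D * f V by
      rw [← _root_.map_mul, ← _root_.map_mul], mul_sub, sub_mul]
    congr 1
    rw [← hcomm (f U), mul_assoc, h1, mul_one]
  rw [Matrix.charpoly, key, Matrix.det_mul, Matrix.det_mul, Matrix.charpoly]
  have h2 : (f U).det * (f V).det = 1 := by rw [← Matrix.det_mul, h1, Matrix.det_one]
  calc (f U).det * (charmatrix D).det * (f V).det
      = (f U).det * (f V).det * (charmatrix D).det := by ring
    _ = (charmatrix D).det := by rw [h2, one_mul]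

lemma pauliVec_eq (v : EuclideanSpace ℝ (Fin 3)) :
    pauliVec v = ∑ i : Fin 3, (v i : ℂ) • pauli i := by
  simp [pauliVec, Fin.sum_univ_three, pauli]

lemma corrE_expand (ρ : Matrix (Fin 2 × Fin 2) (Fin 2 × Fin 2) ℂ)
    (a b : EuclideanSpace ℝ (Fin 3)) :
    corrE ρ a b = ∑ i : Fin 3, ∑ j : Fin 3, a i * b j * corrMatrix ρ i j := by
  have hk : pauliVec a ⊗ₖ pauliVec b
      = ∑ i : Fin 3, ∑ j : Fin 3, ((a i : ℂ) * (b j : ℂ)) • (pauli i ⊗ₖ pauli j) := by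
    rw [pauliVec_eq a, pauliVec_eq b]
    simp only [Fin.sum_univ_three, add_kronecker, kronecker_add, smul_kronecker,
      kronecker_smul, smul_smul, smul_add]
    module
  rw [corrE, hk]
  simp only [Matrix.mul_sum, trace_sum, Matrix.mul_smul, trace_smul, smul_eq_mul]
  rw [Complex.re_sum]
  refine Finset.sum_congr rfl fun i _ => ?_
  rw [Complex.re_sum]
  refine Finset.sum_congr rfl fun j _ => ?_
  rw [corrMatrix, ← Complex.ofReal_mul]
  exact Complex.re_ofReal_mul _ _

lemma rip_eq_sum (x y : EuclideanSpace ℝ (Fin 3)) : rip x y = ∑ i, x i * y i := by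
  rw [rip, PiLp.inner_apply]
  simp [RCLike.inner_apply, mul_comm]

lemma matVec_apply (T : Matrix (Fin 3) (Fin 3) ℝ) (v : EuclideanSpace ℝ (Fin 3)) (i : Fin 3) :
    matVec T v i = T.mulVec (⇑v) i := rfl

lemma corrE_eq_rip (ρ : Matrix (Fin 2 × Fin 2) (Fin 2 × Fin 2) ℂ)
    (a b : EuclideanSpace ℝ (Fin 3)) :
    corrE ρ a b = rip (matVec (corrMatrix ρ)ᵀ a) b := by
  rw [corrE_expand, rip_eq_sum, Finset.sum_comm]
  refine Finset.sum_congr rfl fun j _ => ?_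
  rw [matVec_apply, Matrix.mulVec, dotProduct, Finset.sum_mul]
  refine Finset.sum_congr rfl fun i _ => ?_
  rw [Matrix.transpose_apply]
  ring

lemma bessel2 (s b1 b2 : EuclideanSpace ℝ (Fin 3)) (h1 : ‖b1‖ = 1) (h2 : ‖b2‖ = 1)
    (h12 : rip b1 b2 = 0) : rip s b1 ^ 2 + rip s b2 ^ 2 ≤ ‖s‖ ^ 2 := by
  have hb1 : (inner ℝ b1 b1 : ℝ) = 1 := by rw [real_inner_self_eq_norm_sq, h1]; norm_num
  have hb2 : (inner ℝ b2 b2 : ℝ) = 1 := by rw [real_inner_self_eq_norm_sq, h2]; norm_num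
  have h12' : (inner ℝ b1 b2 : ℝ) = 0 := h12
  have h21 : (inner ℝ b2 b1 : ℝ) = 0 := by rw [real_inner_comm]; exact h12'
  have key := real_inner_self_nonneg
    (x := s - (inner ℝ s b1 : ℝ) • b1 - (inner ℝ s b2 : ℝ) • b2)
  have expand : (inner ℝ (s - (inner ℝ s b1 : ℝ) • b1 - (inner ℝ s b2 : ℝ) • b2)
      (s - (inner ℝ s b1 : ℝ) • b1 - (inner ℝ s b2 : ℝ) • b2) : ℝ)
      = ‖s‖ ^ 2 - (inner ℝ s b1 : ℝ) ^ 2 - (inner ℝ s b2 : ℝ) ^ 2 := by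
    simp only [inner_sub_left, inner_sub_right, real_inner_smul_left, real_inner_smul_right,
      hb1, hb2, h12', h21]
    rw [real_inner_self_eq_norm_sq, real_inner_comm b1 s, real_inner_comm b2 s]
    ring
  rw [expand] at key
  have e1 : rip s b1 = (inner ℝ s b1 : ℝ) := rfl
  have e2 : rip s b2 = (inner ℝ s b2 : ℝ) := rfl
  rw [e1, e2]
  linarith

lemma pair_of_multiset2 (a b y z : ℝ) (h : (a ::ₘ {b} : Multiset ℝ) = y ::ₘ {z}) :
    (a = y ∧ b = z) ∨ (a = z ∧ b = y) := by
  have hy : y ∈ (a ::ₘ {b} : Multiset ℝ) := by rw [h]; simp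
  rcases Multiset.mem_cons.mp hy with h1 | h2
  · rw [h1] at h ⊢
    have h' := (Multiset.cons_inj_right _).mp h
    exact Or.inl ⟨rfl, Multiset.singleton_inj.mp h'⟩
  · rw [Multiset.mem_singleton] at h2
    rw [h2] at h ⊢
    rw [show ({b} : Multiset ℝ) = b ::ₘ 0 from rfl, Multiset.cons_swap] at h
    have h' := (Multiset.cons_inj_right _).mp h
    rw [Multiset.cons_zero] at h'
    exact Or.inr ⟨Multiset.singleton_inj.mp h', rfl⟩

lemma exists_pair_of_multiset3 (μ : Fin 3 → ℝ) (x y z : ℝ)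
    (h : ({μ 0, μ 1, μ 2} : Multiset ℝ) = {x, y, z}) :
    ∃ i j : Fin 3, i ≠ j ∧ μ i = x ∧ μ j = y := by
  simp only [Multiset.insert_eq_cons] at h
  have hx : x ∈ (μ 0 ::ₘ μ 1 ::ₘ {μ 2} : Multiset ℝ) := by rw [h]; simp
  rcases Multiset.mem_cons.mp hx with h0 | hx'
  · rw [← h0] at h
    have h' := (Multiset.cons_inj_right _).mp h
    rcases pair_of_multiset2 _ _ _ _ h' with ⟨hy, _⟩ | ⟨_, hy⟩
    · exact ⟨0, 1, by decide, h0.symm, hy⟩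
    · exact ⟨0, 2, by decide, h0.symm, hy⟩
  rcases Multiset.mem_cons.mp hx' with h1 | hx''
  · rw [← h1, Multiset.cons_swap] at h
    have h' := (Multiset.cons_inj_right _).mp h
    rcases pair_of_multiset2 _ _ _ _ h' with ⟨hy, _⟩ | ⟨_, hy⟩
    · exact ⟨1, 0, by decide, h1.symm, hy⟩
    · exact ⟨1, 2, by decide, h1.symm, hy⟩
  · rw [Multiset.mem_singleton] at hx''
    rw [← hx'', show ({x} : Multiset ℝ) = x ::ₘ 0 from rfl, Multiset.cons_swap (μ 1) x,
      Multiset.cons_swap (μ 0) x, Multiset.cons_zero] at h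
    have h' := (Multiset.cons_inj_right _).mp h
    rcases pair_of_multiset2 _ _ _ _ h' with ⟨hy, _⟩ | ⟨_, hy⟩
    · exact ⟨2, 0, by decide, hx''.symm, hy⟩
    · exact ⟨2, 1, by decide, hx''.symm, hy⟩

lemma exists_unit_orth (v : EuclideanSpace ℝ (Fin 3)) :
    ∃ u : EuclideanSpace ℝ (Fin 3), ‖u‖ = 1 ∧ rip v u = 0 := by
  have hbot : (ℝ ∙ v)ᗮ ≠ ⊥ := by
    intro hb
    have htop : (ℝ ∙ v) = ⊤ := Submodule.orthogonal_eq_bot_iff.mp hb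
    have h3 : Module.finrank ℝ (EuclideanSpace ℝ (Fin 3)) = 3 := finrank_euclideanSpace_fin
    have hle : Module.finrank ℝ (ℝ ∙ v) ≤ 1 := by
      by_cases hv : v = 0
      · subst hv
        rw [Submodule.span_zero_singleton]
        simp
      · rw [finrank_span_singleton hv]
    rw [htop, finrank_top, h3] at hle
    omega
  obtain ⟨u, hu, hu0⟩ := Submodule.exists_mem_ne_zero_of_ne_bot hbot
  refine ⟨‖u‖⁻¹ • u, ?_, ?_⟩
  · rw [norm_smul, norm_inv, norm_norm, inv_mul_cancel₀ (norm_ne_zero_iff.mpr hu0)]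
  · have : (inner ℝ v u : ℝ) = 0 := by
      have := (Submodule.mem_orthogonal _ u).mp hu v (Submodule.mem_span_singleton_self v)
      simpa [real_inner_comm] using this
    rw [rip, real_inner_smul_right, this, mul_zero]

lemma sqrt_add_bound (a b c : ℝ) (ha : 0 ≤ a) (hb : 0 ≤ b) (h : a ^ 2 + b ^ 2 ≤ 2 * c) :
    a + b ≤ 2 * Real.sqrt c := by
  have hc : 0 ≤ c := by nlinarith
  have hr2 : Real.sqrt c ^ 2 = c := Real.sq_sqrt hc
  have hr0 : 0 ≤ Real.sqrt c := Real.sqrt_nonneg _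
  nlinarith [sq_nonneg (a - b), sq_nonneg (a + b - 2 * Real.sqrt c)]

end AuxiliaryLemmas

/-- `2√(λ1+λ2)` is the greatest value of the mutually-unbiased analog CHSH
quantity `√((E11+E21)² + (E12+E22)²) + √((E11−E21)² + (E12−E22)²)` over quadruples of unit
vectors with `a1 ⟂ a2` and `b1 ⟂ b2`. -/
theorem achsh_mub_isGreatest (ρ : Matrix (Fin 2 × Fin 2) (Fin 2 × Fin 2) ℂ)
    (hρ : ρ.PosSemidef) (htr : ρ.trace = 1)
    (l1 l2 l3 : ℝ) (h12 : l2 ≤ l1) (h23 : l3 ≤ l2)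
    (hchar : (corrMatrix ρ * (corrMatrix ρ)ᵀ).charpoly
      = (X - C l1) * (X - C l2) * (X - C l3)) :
    IsGreatest {s : ℝ | ∃ a1 a2 b1 b2 : EuclideanSpace ℝ (Fin 3),
        ‖a1‖ = 1 ∧ ‖a2‖ = 1 ∧ ‖b1‖ = 1 ∧ ‖b2‖ = 1 ∧
        rip a1 a2 = 0 ∧ rip b1 b2 = 0 ∧
        s = Real.sqrt ((corrE ρ a1 b1 + corrE ρ a2 b1) ^ 2
              + (corrE ρ a1 b2 + corrE ρ a2 b2) ^ 2)
          + Real.sqrt ((corrE ρ a1 b1 - corrE ρ a2 b1) ^ 2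
              + (corrE ρ a1 b2 - corrE ρ a2 b2) ^ 2)}
      (2 * Real.sqrt (l1 + l2)) := by
  classical
  set T := corrMatrix ρ with hTdef
  set M := T * Tᵀ with hMdef
  have hM : M.IsHermitian := by
    show Mᴴ = M
    rw [hMdef, conjTranspose_mul, conjTranspose_eq_transpose_of_trivial,
      conjTranspose_eq_transpose_of_trivial, transpose_transpose]
  set μ : Fin 3 → ℝ := hM.eigenvalues with hμdef
  set v := hM.eigenvectorBasis with hvdef
  have hUV : (hM.eigenvectorUnitary : Matrix (Fin 3) (Fin 3) ℝ) *
      (star (hM.eigenvectorUnitary : Matrix (Fin 3) (Fin 3) ℝ)) = 1 :=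
    Unitary.coe_mul_star_self _
  have hcp : M.charpoly = ∏ i, (X - C (μ i)) := by
    conv_lhs => rw [hM.spectral_theorem, Unitary.conjStarAlgAut_apply]
    rw [aux_charpoly_conj _ _ _ hUV, aux_charpoly_diagonal]
    refine Finset.prod_congr rfl fun i _ => ?_
    simp [RCLike.ofReal_real_eq_id]
    rfl
  have hprod : (X - C (μ 0)) * ((X - C (μ 1)) * (X - C (μ 2)))
      = (X - C l1) * (X - C l2) * (X - C l3) := by
    have h := hcp.symm.trans hchar
    rwa [Fin.prod_univ_three, mul_assoc] at h
  have hms : ({μ 0, μ 1, μ 2} : Multiset ℝ) = {l1, l2, l3} := by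
    have h1 : ((({μ 0, μ 1, μ 2} : Multiset ℝ)).map fun a => (X : ℝ[X]) - C a).prod
        = ((({l1, l2, l3} : Multiset ℝ)).map fun a => (X : ℝ[X]) - C a).prod := by
      simp only [Multiset.insert_eq_cons, Multiset.map_cons, Multiset.map_singleton,
        Multiset.prod_cons, Multiset.prod_singleton]
      rw [hprod]; ring
    have h2 := congrArg Polynomial.roots h1
    rwa [Polynomial.roots_multiset_prod_X_sub_C, Polynomial.roots_multiset_prod_X_sub_C] at h2
  have hsum : μ 0 + μ 1 + μ 2 = l1 + l2 + l3 := by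
    have h := congrArg Multiset.sum hms
    simp only [Multiset.insert_eq_cons, Multiset.sum_cons, Multiset.sum_singleton] at h
    linarith
  have hmem : ∀ i : Fin 3, μ i = l1 ∨ μ i = l2 ∨ μ i = l3 := by
    intro i
    have hin : μ i ∈ ({μ 0, μ 1, μ 2} : Multiset ℝ) := by fin_cases i <;> simp
    rw [hms] at hin
    simpa using hin
  have hge : ∀ i : Fin 3, l3 ≤ μ i := by
    intro i; rcases hmem i with h | h | h <;> linarith
  have hvnorm : ∀ k, ‖v k‖ = 1 := fun k => v.orthonormal.1 k
  have hvorth : ∀ k l : Fin 3, k ≠ l → rip (v k) (v l) = 0 := fun k l hkl => v.orthonormal.2 hkl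
  have hMeig : ∀ k, matVec M (v k) = μ k • v k := by
    intro k
    have h := hM.mulVec_eigenvectorBasis k
    ext i
    have h0 : matVec M (v k) i = (M *ᵥ ⇑(v k)) i := rfl
    rw [h0, h]
    rfl
  have hmv : ∀ x, matVec M x = Matrix.toEuclideanLin M x := by
    intro x; ext i; rfl
  have hcorr : ∀ a b : EuclideanSpace ℝ (Fin 3), corrE ρ a b = rip (matVec Tᵀ a) b :=
    fun a b => corrE_eq_rip ρ a b
  have hww : ∀ x y : EuclideanSpace ℝ (Fin 3),
      rip (matVec Tᵀ x) (matVec Tᵀ y) = rip x (matVec M y) := by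
    intro x y
    rw [rip_eq_sum, rip_eq_sum]
    show (Tᵀ *ᵥ ⇑x) ⬝ᵥ (Tᵀ *ᵥ ⇑y) = ⇑x ⬝ᵥ (M *ᵥ ⇑y)
    conv_rhs => rw [show M = T * Tᵀ from hMdef, ← Matrix.mulVec_mulVec,
      Matrix.dotProduct_mulVec]
    rw [Matrix.mulVec_transpose]
  have hQ : ∀ x : EuclideanSpace ℝ (Fin 3),
      rip x (matVec M x) = ∑ k, μ k * (rip (v k) x)^2 := by
    intro x
    have hx := v.sum_repr' x
    have h1 : matVec M x = ∑ k, (inner ℝ (v k) x : ℝ) • (μ k • v k) := by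
      conv_lhs => rw [← hx]
      rw [hmv, map_sum]
      refine Finset.sum_congr rfl fun k _ => ?_
      rw [_root_.map_smul, ← hmv, hMeig k]
    rw [rip, h1, inner_sum]
    refine Finset.sum_congr rfl fun k _ => ?_
    rw [real_inner_smul_right, real_inner_smul_right]
    have e : rip (v k) x = (inner ℝ (v k) x : ℝ) := rfl
    rw [e, real_inner_comm x (v k)]
    ring
  have hPar : ∀ x : EuclideanSpace ℝ (Fin 3), ‖x‖ = 1 → ∑ k, (rip (v k) x)^2 = 1 := by
    intro x hxn
    have h := v.sum_inner_mul_inner x x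
    rw [real_inner_self_eq_norm_sq, hxn, one_pow] at h
    rw [← h]
    refine Finset.sum_congr rfl fun k _ => ?_
    have e : rip (v k) x = (inner ℝ (v k) x : ℝ) := rfl
    rw [e, sq]
    congr 1
    exact real_inner_comm _ _
  have hQbound : ∀ x1 x2 : EuclideanSpace ℝ (Fin 3), ‖x1‖ = 1 → ‖x2‖ = 1 → rip x1 x2 = 0 →
      rip x1 (matVec M x1) + rip x2 (matVec M x2) ≤ l1 + l2 := by
    intro x1 x2 h1 h2 h12
    rw [hQ, hQ]
    have hp1 := hPar x1 h1
    have hp2 := hPar x2 h2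
    have hb : ∀ k, (rip (v k) x1)^2 + (rip (v k) x2)^2 ≤ 1 := by
      intro k
      have h := bessel2 (v k) x1 x2 h1 h2 h12
      rw [hvnorm k, one_pow] at h
      exact h
    have key : ∀ k : Fin 3,
        0 ≤ (μ k - l3) * (1 - ((rip (v k) x1)^2 + (rip (v k) x2)^2)) := fun k =>
      mul_nonneg (by linarith [hge k]) (by linarith [hb k])
    have key0 := key 0; have key1 := key 1; have key2 := key 2
    rw [Fin.sum_univ_three] at hp1 hp2
    rw [Fin.sum_univ_three, Fin.sum_univ_three]
    have m1 : l3 * (rip (v 0) x1 ^ 2 + rip (v 1) x1 ^ 2 + rip (v 2) x1 ^ 2) = l3 := by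
      rw [hp1]; ring
    have m2 : l3 * (rip (v 0) x2 ^ 2 + rip (v 1) x2 ^ 2 + rip (v 2) x2 ^ 2) = l3 := by
      rw [hp2]; ring
    nlinarith [key0, key1, key2, hsum, m1, m2]
  constructor
  · -- attainment
    obtain ⟨i, j, hij, hμi, hμj⟩ := exists_pair_of_multiset3 μ l1 l2 l3 hms
    set u1 := v i with hu1
    set u2 := v j with hu2
    set w1 := matVec Tᵀ u1 with hw1def
    set w2 := matVec Tᵀ u2 with hw2def
    have hripself : ∀ k : Fin 3, rip (v k) (v k) = 1 := by
      intro k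
      show (inner ℝ (v k) (v k) : ℝ) = 1
      rw [real_inner_self_eq_norm_sq, hvnorm k, one_pow]
    have hw11 : rip w1 w1 = l1 := by
      rw [hw1def, hww u1 u1, hMeig i, rip, real_inner_smul_right, hμi]
      have := hripself i
      rw [rip] at this
      rw [this, mul_one]
    have hw22 : rip w2 w2 = l2 := by
      rw [hw2def, hww u2 u2, hMeig j, rip, real_inner_smul_right, hμj]
      have := hripself j
      rw [rip] at this
      rw [this, mul_one]
    have hw12 : rip w1 w2 = 0 := by
      rw [hw1def, hw2def, hww u1 u2, hMeig j, rip, real_inner_smul_right]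
      have := hvorth i j hij
      rw [rip] at this
      rw [this, mul_zero]
    have hl1 : 0 ≤ l1 := by
      rw [← hw11]; exact real_inner_self_nonneg
    have hl2' : 0 ≤ l2 := by
      rw [← hw22]; exact real_inner_self_nonneg
    have hn1 : ‖w1‖ = Real.sqrt l1 := by
      have : rip w1 w1 = ‖w1‖^2 := real_inner_self_eq_norm_sq w1
      rw [this] at hw11
      rw [← hw11, Real.sqrt_sq (norm_nonneg _)]
    have hn2 : ‖w2‖ = Real.sqrt l2 := by
      have : rip w2 w2 = ‖w2‖^2 := real_inner_self_eq_norm_sq w2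
      rw [this] at hw22
      rw [← hw22, Real.sqrt_sq (norm_nonneg _)]
    by_cases h1z : l1 = 0
    · -- l1 = 0, hence l2 = 0, w1 = w2 = 0
      have h2z : l2 = 0 := le_antisymm (h1z ▸ h12) hl2'
      have hw1z : w1 = 0 := by
        have : (inner ℝ w1 w1 : ℝ) = 0 := by rw [show (inner ℝ w1 w1 : ℝ) = rip w1 w1 from rfl, hw11, h1z]
        exact inner_self_eq_zero.mp this
      have hw2z : w2 = 0 := by
        have : (inner ℝ w2 w2 : ℝ) = 0 := by rw [show (inner ℝ w2 w2 : ℝ) = rip w2 w2 from rfl, hw22, h2z]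
        exact inner_self_eq_zero.mp this
      refine ⟨u1, u2, EuclideanSpace.single 0 1, EuclideanSpace.single 1 1,
        hvnorm i, hvnorm j, ?_, ?_, hvorth i j hij, ?_, ?_⟩
      · simpa using EuclideanSpace.norm_single (𝕜 := ℝ) 0 (1 : ℝ)
      · simpa using EuclideanSpace.norm_single (𝕜 := ℝ) 1 (1 : ℝ)
      · rw [rip]
        rw [show ((1 : ℝ)) = ((1 : ℝ) : ℝ) from rfl]
        rw [EuclideanSpace.inner_single_left]
        simp [EuclideanSpace.single_apply]
      · have hz : ∀ b : EuclideanSpace ℝ (Fin 3), corrE ρ u1 b = 0 := by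
          intro b; rw [hcorr, ← hw1def, hw1z, rip, inner_zero_left]
        have hz2 : ∀ b : EuclideanSpace ℝ (Fin 3), corrE ρ u2 b = 0 := by
          intro b; rw [hcorr, ← hw2def, hw2z, rip, inner_zero_left]
        rw [hz, hz, hz2, hz2, h1z, h2z]
        norm_num
    · have hl1p : 0 < l1 := lt_of_le_of_ne hl1 (Ne.symm h1z)
      have hs1 : Real.sqrt l1 ≠ 0 := by positivity
      have hw1n : ‖w1‖ ≠ 0 := by rw [hn1]; exact hs1
      have hb1nrm : ‖‖w1‖⁻¹ • w1‖ = 1 := by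
        rw [norm_smul, norm_inv, norm_norm, inv_mul_cancel₀ hw1n]
      have hsmulv : ∀ (c : ℝ) (x y : EuclideanSpace ℝ (Fin 3)),
          rip x (c • y) = c * rip x y := by
        intro c x y; rw [rip, real_inner_smul_right]; rfl
      have hw21 : rip w2 w1 = 0 := by
        rw [rip, real_inner_comm]; exact hw12
      have hE11 : corrE ρ u1 (‖w1‖⁻¹ • w1) = Real.sqrt l1 := by
        rw [hcorr, ← hw1def, hsmulv, hw11, hn1]
        field_simp
        rw [Real.sq_sqrt hl1]
      have hE21 : corrE ρ u2 (‖w1‖⁻¹ • w1) = 0 := by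
        rw [hcorr, ← hw2def, hsmulv, hw21, mul_zero]
      by_cases h2z : l2 = 0
      · -- l1 > 0, l2 = 0
        have hw2z : w2 = 0 := by
          have h : (inner ℝ w2 w2 : ℝ) = 0 := by
            rw [show (inner ℝ w2 w2 : ℝ) = rip w2 w2 from rfl, hw22, h2z]
          exact inner_self_eq_zero.mp h
        obtain ⟨b2, hb2n, hb2o⟩ := exists_unit_orth w1
        have hE12 : corrE ρ u1 b2 = 0 := by
          rw [hcorr, ← hw1def]; exact hb2o
        have hE22 : corrE ρ u2 b2 = 0 := by
          rw [hcorr, ← hw2def, hw2z, rip, inner_zero_left]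
        refine ⟨u1, u2, ‖w1‖⁻¹ • w1, b2, hvnorm i, hvnorm j, hb1nrm, hb2n,
          hvorth i j hij, ?_, ?_⟩
        · rw [rip, real_inner_smul_left]
          have : (inner ℝ w1 b2 : ℝ) = 0 := hb2o
          rw [this, mul_zero]
        · rw [hE11, hE21, hE12, hE22, h2z]
          have h1 : ((Real.sqrt l1 + 0) ^ 2 + ((0 : ℝ) + 0) ^ 2) = l1 := by
            rw [add_zero, add_zero, Real.sq_sqrt hl1]; norm_num
          have h2 : ((Real.sqrt l1 - 0) ^ 2 + ((0 : ℝ) - 0) ^ 2) = l1 := by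
            rw [sub_zero, sub_zero, Real.sq_sqrt hl1]; norm_num
          rw [h1, h2, add_zero]
          ring
      · -- l1 > 0, l2 > 0
        have hl2p : 0 < l2 := lt_of_le_of_ne hl2' (Ne.symm h2z)
        have hs2 : Real.sqrt l2 ≠ 0 := by positivity
        have hw2n : ‖w2‖ ≠ 0 := by rw [hn2]; exact hs2
        have hb2nrm : ‖‖w2‖⁻¹ • w2‖ = 1 := by
          rw [norm_smul, norm_inv, norm_norm, inv_mul_cancel₀ hw2n]
        have hE12 : corrE ρ u1 (‖w2‖⁻¹ • w2) = 0 := by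
          rw [hcorr, ← hw1def, hsmulv, hw12, mul_zero]
        have hE22 : corrE ρ u2 (‖w2‖⁻¹ • w2) = Real.sqrt l2 := by
          rw [hcorr, ← hw2def, hsmulv, hw22, hn2]
          field_simp
          rw [Real.sq_sqrt hl2']
        refine ⟨u1, u2, ‖w1‖⁻¹ • w1, ‖w2‖⁻¹ • w2, hvnorm i, hvnorm j, hb1nrm, hb2nrm,
          hvorth i j hij, ?_, ?_⟩
        · rw [rip, real_inner_smul_left, real_inner_smul_right]
          have : (inner ℝ w1 w2 : ℝ) = 0 := hw12
          rw [this, mul_zero, mul_zero]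
        · rw [hE11, hE21, hE12, hE22]
          have h1 : ((Real.sqrt l1 + 0) ^ 2 + (0 + Real.sqrt l2) ^ 2) = l1 + l2 := by
            rw [add_zero, zero_add, Real.sq_sqrt hl1, Real.sq_sqrt hl2']
          have h2 : ((Real.sqrt l1 - 0) ^ 2 + (0 - Real.sqrt l2) ^ 2) = l1 + l2 := by
            rw [sub_zero, zero_sub, neg_sq, Real.sq_sqrt hl1, Real.sq_sqrt hl2']
          rw [h1, h2]
          ring
  · -- upper bound
    rintro s ⟨a1, a2, b1, b2, ha1, ha2, hb1, hb2, ha12, hb12, rfl⟩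
    have hadd : ∀ x y z : EuclideanSpace ℝ (Fin 3), rip x z + rip y z = rip (x + y) z := by
      intro x y z; rw [rip, rip, rip, inner_add_left]
    have hsub : ∀ x y z : EuclideanSpace ℝ (Fin 3), rip x z - rip y z = rip (x - y) z := by
      intro x y z; rw [rip, rip, rip, inner_sub_left]
    simp only [hcorr]
    rw [hadd, hadd, hsub, hsub]
    set S := matVec Tᵀ a1 + matVec Tᵀ a2 with hS
    set D := matVec Tᵀ a1 - matVec Tᵀ a2 with hD
    have t1 : Real.sqrt (rip S b1 ^ 2 + rip S b2 ^ 2) ≤ ‖S‖ := by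
      have h := bessel2 S b1 b2 hb1 hb2 hb12
      have h2 := Real.sqrt_le_sqrt h
      rwa [Real.sqrt_sq (norm_nonneg _)] at h2
    have t2 : Real.sqrt (rip D b1 ^ 2 + rip D b2 ^ 2) ≤ ‖D‖ := by
      have h := bessel2 D b1 b2 hb1 hb2 hb12
      have h2 := Real.sqrt_le_sqrt h
      rwa [Real.sqrt_sq (norm_nonneg _)] at h2
    have hsq : ‖S‖ ^ 2 + ‖D‖ ^ 2 ≤ 2 * (l1 + l2) := by
      have e1 : ‖S‖ ^ 2 = rip (matVec Tᵀ a1) (matVec Tᵀ a1)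
          + 2 * rip (matVec Tᵀ a1) (matVec Tᵀ a2)
          + rip (matVec Tᵀ a2) (matVec Tᵀ a2) := by
        rw [hS, ← real_inner_self_eq_norm_sq]
        exact real_inner_add_add_self _ _
      have e2 : ‖D‖ ^ 2 = rip (matVec Tᵀ a1) (matVec Tᵀ a1)
          - 2 * rip (matVec Tᵀ a1) (matVec Tᵀ a2)
          + rip (matVec Tᵀ a2) (matVec Tᵀ a2) := by
        rw [hD, ← real_inner_self_eq_norm_sq]
        exact real_inner_sub_sub_self _ _
      have q1 : rip (matVec Tᵀ a1) (matVec Tᵀ a1) = rip a1 (matVec M a1) := hww _ _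
      have q2 : rip (matVec Tᵀ a2) (matVec Tᵀ a2) = rip a2 (matVec M a2) := hww _ _
      have qb := hQbound a1 a2 ha1 ha2 ha12
      rw [q1, q2] at e1 e2
      linarith
    have hfin : ‖S‖ + ‖D‖ ≤ 2 * Real.sqrt (l1 + l2) :=
      sqrt_add_bound _ _ _ (norm_nonneg _) (norm_nonneg _) hsq
    exact le_trans (add_le_add t1 t2) hfin
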